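/- If N ≥ 1 and i is a non-corner node index (i mod 4 ∈ {1,2}, so automatically 1 ≤ i ≤ 4^N−2), then the nodes h_N(i−1) and h_N(i+1) are vertex connected, i.e., their Euclidean distance equals √2; hence a blocked non-corner node can be evaded by going directly from the preceding to the following node. -/

import Mathlib

/-- The `N`-th order approximated Hilbert curve, mapping indices `{0,...,4^N-1}`
to nodes of the grid `{0,...,2^N-1} × {0,...,2^N-1} ⊆ ℤ × ℤ`. -/
def hilbert : ℕ → ℕ → ℤ × ℤ
  | 0, _ => (0, 0)
  | 1, i =>
    if i = 0 then (0, 0)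
    else if i = 1 then (0, 1)
    else if i = 2 then (1, 1)
    else (1, 0)
  | N + 2, i =>
    let q := i / 4 ^ (N + 1)
    let s : ℤ := 2 ^ (N + 1)
    let p := hilbert (N + 1) (i % 4 ^ (N + 1))
    if q = 0 then (p.2, p.1)
    else if q = 1 then (p.1, p.2 + s)
    else if q = 2 then (p.1 + s, p.2 + s)
    else (2 * s - 1 - p.2, s - 1 - p.1)

/-- Euclidean distance between two points of `ℤ × ℤ`. -/
noncomputable def euclDist (a b : ℤ × ℤ) : ℝ :=
  Real.sqrt (((a.1 - b.1 : ℤ) : ℝ) ^ 2 + ((a.2 - b.2 : ℤ) : ℝ) ^ 2)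

/-- Two points of `ℤ × ℤ` are edge connected if their Euclidean distance equals 1. -/
def EdgeConnected (a b : ℤ × ℤ) : Prop := euclDist a b = 1

/-- Two points of `ℤ × ℤ` are vertex connected if both coordinates differ by exactly 1. -/
def VertexConnected (a b : ℤ × ℤ) : Prop := |a.1 - b.1| = 1 ∧ |a.2 - b.2| = 1

/-- Membership in the grid `{0,...,2^N-1} × {0,...,2^N-1}`. -/
def InGrid (N : ℕ) (p : ℤ × ℤ) : Prop :=
  0 ≤ p.1 ∧ p.1 ≤ 2 ^ N - 1 ∧ 0 ≤ p.2 ∧ p.2 ≤ 2 ^ N - 1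

/-- The closed segment from `u` to `v` (centres of cells, viewed in `ℝ²`) is disjoint
from the open unit cell centred at `c`. -/
def SegAvoidsCell (u v c : ℤ × ℤ) : Prop :=
  ∀ t : ℝ, t ∈ Set.Icc (0 : ℝ) 1 →
    ¬ (|(1 - t) * (u.1 : ℝ) + t * (v.1 : ℝ) - (c.1 : ℝ)| < 1 / 2 ∧
       |(1 - t) * (u.2 : ℝ) + t * (v.2 : ℝ) - (c.2 : ℝ)| < 1 / 2)

/-- An evasion tour for the blocked index set `B` on the `N`-th order Hilbert grid:
a sequence of waypoints `w 0, ..., w m` in the grid, starting at the entry node,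
ending at the exit node, avoiding all blocked nodes, covering every unblocked grid
point, and whose straight-line segments avoid the interiors of all blocked cells. -/
def IsEvasionTour (N : ℕ) (B : Finset ℕ) (m : ℕ) (w : ℕ → ℤ × ℤ) : Prop :=
  w 0 = hilbert N 0 ∧
  w m = hilbert N (4 ^ N - 1) ∧
  (∀ j ≤ m, InGrid N (w j)) ∧
  (∀ j ≤ m, ∀ b ∈ B, w j ≠ hilbert N b) ∧
  (∀ p : ℤ × ℤ, InGrid N p → (∀ b ∈ B, p ≠ hilbert N b) → ∃ j ≤ m, w j = p) ∧
  (∀ j < m, ∀ b ∈ B, SegAvoidsCell (w j) (w (j + 1)) (hilbert N b))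

lemma hilbert_vc_aux : ∀ N i, i < 4 ^ (N + 1) → (i % 4 = 1 ∨ i % 4 = 2) →
    VertexConnected (hilbert (N + 1) (i - 1)) (hilbert (N + 1) (i + 1)) := by
  intro N
  induction N with
  | zero =>
    intro i hi hmod
    have : i = 1 ∨ i = 2 := by omega
    rcases this with rfl | rfl <;>
      simp [hilbert, VertexConnected]
  | succ n ih =>
    intro i hi hmod
    set M := 4 ^ (n + 1) with hM
    have h4M : (4 : ℕ) ∣ M := dvd_pow_self 4 (Nat.succ_ne_zero n)
    have hMpos : 0 < M := Nat.pow_pos (by norm_num)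
    have hrmod : i % M % 4 = i % 4 := Nat.mod_mod_of_dvd i h4M
    set r := i % M with hr
    set q := i / M with hq
    have hiqr : i = M * q + r := (Nat.div_add_mod i M).symm
    have hrM : r < M := Nat.mod_lt _ hMpos
    have hr1 : 1 ≤ r := by omega
    have hr2 : r + 1 < M := by omega
    -- quotients and remainders of i-1 and i+1
    have hq1 : (i - 1) / M = q := by
      have : i - 1 = (r - 1) + M * q := by omega
      rw [this, Nat.add_mul_div_left _ _ hMpos, Nat.div_eq_of_lt (by omega)]
      omega
    have hq2 : (i + 1) / M = q := by
      have : i + 1 = (r + 1) + M * q := by omega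
      rw [this, Nat.add_mul_div_left _ _ hMpos, Nat.div_eq_of_lt (by omega)]
      omega
    have hm1 : (i - 1) % M = r - 1 := by
      have : i - 1 = (r - 1) + M * q := by omega
      rw [this, Nat.add_mul_mod_self_left, Nat.mod_eq_of_lt (by omega)]
    have hm2 : (i + 1) % M = r + 1 := by
      have : i + 1 = (r + 1) + M * q := by omega
      rw [this, Nat.add_mul_mod_self_left, Nat.mod_eq_of_lt (by omega)]
    have hihyp := ih r hrM (by omega)
    obtain ⟨h1, h2⟩ := hihyp
    have e1 : hilbert (n + 2) (i - 1) =
        (let s : ℤ := 2 ^ (n + 1);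
         let p := hilbert (n + 1) (r - 1);
         if q = 0 then (p.2, p.1)
         else if q = 1 then (p.1, p.2 + s)
         else if q = 2 then (p.1 + s, p.2 + s)
         else (2 * s - 1 - p.2, s - 1 - p.1)) := by
      show (let q' := (i - 1) / 4 ^ (n + 1);
            let s : ℤ := 2 ^ (n + 1);
            let p := hilbert (n + 1) ((i - 1) % 4 ^ (n + 1));
            if q' = 0 then (p.2, p.1)
            else if q' = 1 then (p.1, p.2 + s)
            else if q' = 2 then (p.1 + s, p.2 + s)
            else (2 * s - 1 - p.2, s - 1 - p.1)) = _
      rw [show (i - 1) / 4 ^ (n + 1) = q from hq1,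
          show (i - 1) % 4 ^ (n + 1) = r - 1 from hm1]
    have e2 : hilbert (n + 2) (i + 1) =
        (let s : ℤ := 2 ^ (n + 1);
         let p := hilbert (n + 1) (r + 1);
         if q = 0 then (p.2, p.1)
         else if q = 1 then (p.1, p.2 + s)
         else if q = 2 then (p.1 + s, p.2 + s)
         else (2 * s - 1 - p.2, s - 1 - p.1)) := by
      show (let q' := (i + 1) / 4 ^ (n + 1);
            let s : ℤ := 2 ^ (n + 1);
            let p := hilbert (n + 1) ((i + 1) % 4 ^ (n + 1));
            if q' = 0 then (p.2, p.1)
            else if q' = 1 then (p.1, p.2 + s)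
            else if q' = 2 then (p.1 + s, p.2 + s)
            else (2 * s - 1 - p.2, s - 1 - p.1)) = _
      rw [show (i + 1) / 4 ^ (n + 1) = q from hq2,
          show (i + 1) % 4 ^ (n + 1) = r + 1 from hm2]
    rw [e1, e2]
    rw [abs_eq (by norm_num : (0:ℤ) ≤ 1)] at h1 h2
    constructor <;>
    · simp only []
      split_ifs <;>
        simp only [Prod.fst, Prod.snd] <;>
        rw [abs_eq (by norm_num : (0:ℤ) ≤ 1)] <;>
        omega

theorem hilbert_noncorner_neighbours_vertexConnected (N i : ℕ) (hN : 1 ≤ N)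
    (hi : i < 4 ^ N) (hmod : i % 4 = 1 ∨ i % 4 = 2) :
    1 ≤ i ∧ i ≤ 4 ^ N - 2 ∧
    VertexConnected (hilbert N (i - 1)) (hilbert N (i + 1)) ∧
    euclDist (hilbert N (i - 1)) (hilbert N (i + 1)) = Real.sqrt 2 := by
  have h4N : (4 : ℕ) ∣ 4 ^ N := dvd_pow_self 4 (by omega)
  obtain ⟨n, rfl⟩ : ∃ n, N = n + 1 := ⟨N - 1, by omega⟩
  have hvc := hilbert_vc_aux n i hi hmod
  refine ⟨by omega, by omega, hvc, ?_⟩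
  obtain ⟨h1, h2⟩ := hvc
  set a := hilbert (n + 1) (i - 1)
  set b := hilbert (n + 1) (i + 1)
  have s1 : (a.1 - b.1) ^ 2 = 1 := by rw [← sq_abs, h1]; norm_num
  have s2 : (a.2 - b.2) ^ 2 = 1 := by rw [← sq_abs, h2]; norm_num
  unfold euclDist
  have : ((a.1 - b.1 : ℤ) : ℝ) ^ 2 + ((a.2 - b.2 : ℤ) : ℝ) ^ 2 = 2 := by
    push_cast [← Int.cast_pow]
    rw_mod_cast [s1, s2]
    norm_num
  rw [this]
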